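/- Let ε ∈ (0, 1/2) and α ∈ (0, 1). Then f_GB(0, ε, α) > 0; in particular x = 0 is not a fixed point of x ↦ f_GB(x, ε, α), so the asymptotic decoding error probability of the Gallager B decoder with missing connections cannot be driven to zero. -/

import Mathlib

/-- Probability that a check-to-variable message is "?". -/
noncomputable def p0 (dc : ℕ) (α : ℝ) : ℝ := 1 - (1 - α) ^ (dc - 1)

/-- Probability that a check-to-variable message is `+1`. -/
noncomputable def pPlus (dc : ℕ) (α x : ℝ) : ℝ :=
  (1 - α) ^ (dc - 1) * (1 + (1 - 2 * x) ^ (dc - 1)) / 2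

/-- Probability that a check-to-variable message is `-1`. -/
noncomputable def pMinus (dc : ℕ) (α x : ℝ) : ℝ :=
  (1 - α) ^ (dc - 1) * (1 - (1 - 2 * x) ^ (dc - 1)) / 2

/-- Density evolution map of the Gallager B decoder (majority threshold
`b = ⌊(dv+1)/2⌋`) with missing connections for the (dv,dc)-regular LDPC
ensemble over the BSC. -/
noncomputable def gallagerB_DE (dv dc : ℕ) (x ε α : ℝ) : ℝ :=
  ∑ v ∈ Finset.Icc ((dv + 1) / 2) (dv - 1),
    (Nat.choose (dv - 1) v : ℝ) * (1 - α) ^ v * α ^ (dv - 1 - v) *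
      ((1 - ε) * pMinus dc α x ^ v * (1 - pMinus dc α x) ^ (dv - 1 - v) +
       ε * (1 - pPlus dc α x ^ v * (1 - pPlus dc α x) ^ (dv - 1 - v)))

/-- For `ε ∈ (0,1/2)` and `α ∈ (0,1)`, the Gallager B DE map with missing
connections satisfies `f_GB(0,ε,α) > 0`; in particular `0` is not a fixed
point, so the asymptotic error probability cannot be driven to zero. -/
theorem gallagerB_DE_zero_not_fixedPoint (dv dc : ℕ) (hdv : 2 ≤ dv) (hdc : 2 ≤ dc)
    (ε α : ℝ) (hε : ε ∈ Set.Ioo (0 : ℝ) (1 / 2)) (hα : α ∈ Set.Ioo (0 : ℝ) 1) :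
    0 < gallagerB_DE dv dc 0 ε α ∧
    (0 : ℝ) ≠ gallagerB_DE dv dc 0 ε α := by
  obtain ⟨hε0, hε2⟩ := hε
  obtain ⟨hα0, hα1⟩ := hα
  have hP0 : (0:ℝ) < (1 - α) ^ (dc - 1) := pow_pos (by linarith) _
  have hP1 : (1 - α) ^ (dc - 1) < 1 :=
    pow_lt_one₀ (by linarith) (by linarith) (by omega)
  have hm : pMinus dc α 0 = 0 := by simp [pMinus]
  have hp : pPlus dc α 0 = (1 - α) ^ (dc - 1) := by
    simp [pPlus]; ring
  have hpos : 0 < gallagerB_DE dv dc 0 ε α := by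
    unfold gallagerB_DE
    apply Finset.sum_pos
    · intro v hv
      simp only [Finset.mem_Icc] at hv
      have hv1 : 1 ≤ v := by omega
      rw [hm, hp]
      have h1 : (0:ℝ) ^ v = 0 := zero_pow (by omega)
      rw [h1]
      have hPv : ((1 - α) ^ (dc - 1)) ^ v < 1 :=
        pow_lt_one₀ (le_of_lt hP0) hP1 (by omega)
      have hq : ((1 - α) ^ (dc - 1)) ^ v * (1 - (1 - α) ^ (dc - 1)) ^ (dv - 1 - v) < 1 := by
        calc ((1 - α) ^ (dc - 1)) ^ v * (1 - (1 - α) ^ (dc - 1)) ^ (dv - 1 - v)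
            ≤ ((1 - α) ^ (dc - 1)) ^ v := by
              apply mul_le_of_le_one_right (pow_nonneg (le_of_lt hP0) _)
              exact pow_le_one₀ (by linarith) (by linarith)
          _ < 1 := hPv
      have hc : (0:ℝ) < (Nat.choose (dv - 1) v : ℝ) := by
        exact_mod_cast Nat.choose_pos hv.2
      have h2 : (0:ℝ) < ε * (1 - ((1 - α) ^ (dc - 1)) ^ v * (1 - (1 - α) ^ (dc - 1)) ^ (dv - 1 - v)) :=
        mul_pos hε0 (by linarith)
      have h3 : (0:ℝ) < (1 - α) ^ v * α ^ (dv - 1 - v) :=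
        mul_pos (pow_pos (by linarith) _) (pow_pos hα0 _)
      nlinarith [mul_pos (mul_pos hc h3) h2]
    · exact Finset.nonempty_Icc.mpr (by omega)
  exact ⟨hpos, ne_of_lt hpos⟩
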